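/- Let F be the multilinear extension of a submodular function f : 2^X → ℝ. If x' ≥ x coordinatewise (both in [0,1]^X), then F(x') ≤ F(x) + Σ_{i∈X} (x'_i - x_i) · ∂F/∂x_i evaluated at x, and F(x') ≥ F(x) + Σ_{i∈X} (x'_i - x_i) · ∂F/∂x_i evaluated at x'. -/

import Mathlib

def Submodular {X : Type*} [DecidableEq X] (f : Finset X → ℝ) : Prop :=
  ∀ S T : Finset X, f (S ∪ T) + f (S ∩ T) ≤ f S + f T

/-- The multilinear extension of a set function. -/
def mExt {X : Type*} [Fintype X] [DecidableEq X] (f : Finset X → ℝ) (x : X → ℝ) : ℝ :=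
  ∑ S : Finset X, f S * ((∏ i ∈ S, x i) * ∏ j ∈ Sᶜ, (1 - x j))

namespace MFOB

variable {X : Type*} [Fintype X] [DecidableEq X]

/-- indicator vector of a finset -/
def ind (W : Finset X) : X → ℝ := fun k => if k ∈ W then 1 else 0

/-- "affine in each coordinate" property -/
def AffProp (H : (X → ℝ) → ℝ) : Prop :=
  ∀ (y : X → ℝ) (i : X) (t : ℝ),
    H (Function.update y i t)
      = (1 - t) * H (Function.update y i 0) + t * H (Function.update y i 1)

lemma one_sub_update (y : X → ℝ) (i : X) (t : ℝ) :
    (fun j => 1 - Function.update y i t j) = Function.update (fun j => 1 - y j) i (1 - t) := by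
  funext j
  rcases eq_or_ne j i with rfl | h
  · simp
  · simp [Function.update_of_ne h]

lemma affProp_mExt (f : Finset X → ℝ) : AffProp (mExt f) := by
  intro y i t
  unfold mExt
  rw [Finset.mul_sum, Finset.mul_sum, ← Finset.sum_add_distrib]
  refine Finset.sum_congr rfl fun S _ => ?_
  by_cases hi : i ∈ S
  · have hic : i ∉ Sᶜ := by simp [hi]
    simp only [one_sub_update, Finset.prod_update_of_mem hi,
      Finset.prod_update_of_notMem hic]
    ring
  · have hic : i ∈ Sᶜ := by simp [hi]
    simp only [one_sub_update, Finset.prod_update_of_notMem hi,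
      Finset.prod_update_of_mem hic]
    ring

lemma AffProp.comp_update {H : (X → ℝ) → ℝ} (hH : AffProp H) (m : X) (c : ℝ) :
    AffProp (fun y => H (Function.update y m c)) := by
  intro y i t
  rcases eq_or_ne i m with rfl | h
  · simp only [Function.update_idem]
    ring
  · simp only [Function.update_comm h]
    exact hH (Function.update y m c) i t

lemma AffProp.sub {H G : (X → ℝ) → ℝ} (hH : AffProp H) (hG : AffProp G) :
    AffProp (fun y => H y - G y) := by
  intro y i t
  show H (Function.update y i t) - G (Function.update y i t) = _
  rw [hH y i t, hG y i t]; ring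

lemma AffProp.self_eq {H : (X → ℝ) → ℝ} (hH : AffProp H) (y : X → ℝ) (i : X) :
    H y = (1 - y i) * H (Function.update y i 0) + y i * H (Function.update y i 1) := by
  conv_lhs => rw [← Function.update_eq_self i y]
  exact hH y i (y i)

/-- evaluation at indicator vectors -/
lemma mExt_ind (f : Finset X → ℝ) (W : Finset X) : mExt f (ind W) = f W := by
  unfold mExt
  rw [Finset.sum_eq_single W]
  · have h1 : ∀ i ∈ W, ind W i = 1 := fun i hi => by simp [ind, hi]
    have h2 : ∀ j ∈ Wᶜ, (1 : ℝ) - ind W j = 1 := fun j hj => by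
      simp only [Finset.mem_compl] at hj; simp [ind, hj]
    rw [Finset.prod_congr rfl h1, Finset.prod_congr rfl h2]
    simp
  · intro S _ hS
    have : ¬ S ⊆ W ∨ ¬ W ⊆ S := by
      by_contra h
      push_neg at h
      exact hS (le_antisymm h.1 h.2)
    rcases this with h | h
    · obtain ⟨k, hkS, hkW⟩ := Finset.not_subset.mp h
      have : (∏ i ∈ S, ind W i) = 0 :=
        Finset.prod_eq_zero hkS (by simp [ind, hkW])
      rw [this]; ring
    · obtain ⟨k, hkW, hkS⟩ := Finset.not_subset.mp h
      have hk : k ∈ Sᶜ := Finset.mem_compl.mpr hkS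
      have : (∏ j ∈ Sᶜ, (1 - ind W j)) = 0 :=
        Finset.prod_eq_zero hk (by simp [ind, hkW])
      rw [this]; ring
  · simp

lemma update_ind_one (W : Finset X) (i : X) :
    Function.update (ind W) i (1 : ℝ) = ind (insert i W) := by
  funext k
  rcases eq_or_ne k i with rfl | h
  · simp [ind]
  · simp [Function.update_of_ne h, ind, h]

lemma update_ind_zero (W : Finset X) (i : X) :
    Function.update (ind W) i (0 : ℝ) = ind (W.erase i) := by
  funext k
  rcases eq_or_ne k i with rfl | h
  · simp [ind]
  · simp [Function.update_of_ne h, ind, Finset.mem_erase, h]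

/-- nonpositivity on the box from nonpositivity at vertices -/
lemma box_nonpos {H : (X → ℝ) → ℝ} (hH : AffProp H) (h01 : ∀ W : Finset X, H (ind W) ≤ 0) :
    ∀ y : X → ℝ, (∀ k, y k ∈ Set.Icc (0 : ℝ) 1) → H y ≤ 0 := by
  classical
  suffices h : ∀ T : Finset X, ∀ y : X → ℝ, (∀ k, y k ∈ Set.Icc (0 : ℝ) 1) →
      (∀ k, k ∉ T → y k = 0 ∨ y k = 1) → H y ≤ 0 by
    intro y hy
    exact h Finset.univ y hy (fun k hk => absurd (Finset.mem_univ k) hk)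
  intro T
  induction T using Finset.induction_on with
  | empty =>
    intro y hy h01y
    have : y = ind (Finset.univ.filter fun k => y k = 1) := by
      funext k
      rcases h01y k (by simp) with h | h <;> simp [ind, h]
    rw [this]; exact h01 _
  | @insert i T hiT ih =>
    intro y hy hout
    rw [hH.self_eq y i]
    have hbox : ∀ (c : ℝ), c ∈ Set.Icc (0:ℝ) 1 → ∀ k, Function.update y i c k ∈ Set.Icc (0:ℝ) 1 := by
      intro c hc k
      rcases eq_or_ne k i with rfl | h
      · simpa using hc
      · simpa [Function.update_of_ne h] using hy k
    have hout' : ∀ (c : ℝ), (c = 0 ∨ c = 1) → ∀ k, k ∉ T → Function.update y i c k = 0 ∨ Function.update y i c k = 1 := by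
      intro c hc k hk
      rcases eq_or_ne k i with rfl | h
      · simpa using hc
      · rw [Function.update_of_ne h]
        exact hout k (by simp [hk, h])
    have h0 := ih (Function.update y i 0) (hbox 0 (by norm_num)) (hout' 0 (Or.inl rfl))
    have h1 := ih (Function.update y i 1) (hbox 1 (by norm_num)) (hout' 1 (Or.inr rfl))
    have hyi := hy i
    simp only [Set.mem_Icc] at hyi
    nlinarith

/-- marginal along coordinate i -/
def Pd (f : Finset X → ℝ) (i : X) (y : X → ℝ) : ℝ :=
  mExt f (Function.update y i 1) - mExt f (Function.update y i 0)

lemma affProp_Pd (f : Finset X → ℝ) (i : X) : AffProp (Pd f i) :=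
  ((affProp_mExt f).comp_update i 1).sub ((affProp_mExt f).comp_update i 0)

lemma Pd_update_self (f : Finset X → ℝ) (i : X) (y : X → ℝ) (t : ℝ) :
    Pd f i (Function.update y i t) = Pd f i y := by
  unfold Pd
  rw [Function.update_idem, Function.update_idem]

/-- the submodularity consequence: second mixed differences of mExt are nonpositive -/
lemma Pd_update_le (f : Finset X → ℝ) (hf : Submodular f) {i j : X} (hij : j ≠ i)
    (v : X → ℝ) (hv : ∀ k, v k ∈ Set.Icc (0 : ℝ) 1) :
    Pd f i (Function.update v j 1) ≤ Pd f i (Function.update v j 0) := by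
  have hA : AffProp (fun y => Pd f i (Function.update y j 1) - Pd f i (Function.update y j 0)) :=
    ((affProp_Pd f i).comp_update j 1).sub ((affProp_Pd f i).comp_update j 0)
  have h01 : ∀ W : Finset X,
      Pd f i (Function.update (ind W) j 1) - Pd f i (Function.update (ind W) j 0) ≤ 0 := by
    intro W
    unfold Pd
    rw [update_ind_one, update_ind_zero, update_ind_one, update_ind_zero,
      update_ind_one, update_ind_zero, mExt_ind, mExt_ind, mExt_ind, mExt_ind]
    set A := (W.erase i).erase j with hA'
    have e1 : insert i (insert j W) = insert i A ∪ insert j A := by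
      ext k; simp only [hA', Finset.mem_insert, Finset.mem_erase, Finset.mem_union]
      by_cases h1 : k = i <;> by_cases h2 : k = j <;> simp [h1, h2] <;> tauto
    have e2 : (insert j W).erase i = insert j A := by
      ext k; simp only [hA', Finset.mem_insert, Finset.mem_erase]
      by_cases h1 : k = i <;> by_cases h2 : k = j <;> simp [h1, h2, hij] <;> tauto
    have e3 : insert i (W.erase j) = insert i A := by
      ext k; simp only [hA', Finset.mem_insert, Finset.mem_erase]
      by_cases h1 : k = i <;> by_cases h2 : k = j <;> simp [h1, h2] <;> tauto
    have e4 : (W.erase j).erase i = insert i A ∩ insert j A := by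
      ext k; simp only [hA', Finset.mem_insert, Finset.mem_erase, Finset.mem_inter]
      by_cases h1 : k = i <;> by_cases h2 : k = j <;>
        simp [h1, h2, hij, hij.symm] <;> tauto
    rw [e1, e2, e3, e4]
    have := hf (insert i A) (insert j A)
    linarith
  have := box_nonpos hA h01 v hv
  linarith

lemma update_mem_box {y : X → ℝ} (hy : ∀ k, y k ∈ Set.Icc (0 : ℝ) 1) {c : ℝ}
    (hc : c ∈ Set.Icc (0 : ℝ) 1) (i : X) : ∀ k, Function.update y i c k ∈ Set.Icc (0 : ℝ) 1 := by
  intro k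
  rcases eq_or_ne k i with rfl | h
  · simpa using hc
  · simpa [Function.update_of_ne h] using hy k

/-- hybrid vector -/
def hyb (y w : X → ℝ) (T : Finset X) : X → ℝ := fun k => if k ∈ T then w k else y k

lemma hyb_insert (y w : X → ℝ) (T : Finset X) (j : X) :
    hyb y w (insert j T) = Function.update (hyb y w T) j (w j) := by
  funext k
  rcases eq_or_ne k j with rfl | h
  · simp [hyb]
  · simp [hyb, Function.update_of_ne h, Finset.mem_insert, h]

lemma hyb_empty (y w : X → ℝ) : hyb y w ∅ = y := funext fun k => by simp [hyb]

lemma hyb_univ (y w : X → ℝ) : hyb y w Finset.univ = w := funext fun k => by simp [hyb]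

lemma hyb_box {y w : X → ℝ} (hy : ∀ k, y k ∈ Set.Icc (0 : ℝ) 1)
    (hw : ∀ k, w k ∈ Set.Icc (0 : ℝ) 1) (T : Finset X) :
    ∀ k, hyb y w T k ∈ Set.Icc (0 : ℝ) 1 := by
  intro k; unfold hyb
  by_cases h : k ∈ T <;> simp [h, hy k, hw k]

/-- monotonicity of marginals: Pd f i is antitone on the box -/
lemma Pd_antitone (f : Finset X → ℝ) (hf : Submodular f) (i : X) {y w : X → ℝ}
    (hy : ∀ k, y k ∈ Set.Icc (0 : ℝ) 1) (hw : ∀ k, w k ∈ Set.Icc (0 : ℝ) 1)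
    (hle : ∀ k, y k ≤ w k) : Pd f i w ≤ Pd f i y := by
  classical
  suffices h : ∀ T : Finset X, Pd f i (hyb y w T) ≤ Pd f i y by
    have := h Finset.univ
    rwa [hyb_univ] at this
  intro T
  induction T using Finset.induction_on with
  | empty => rw [hyb_empty]
  | @insert j T hjT ih =>
    rw [hyb_insert]
    set v := hyb y w T with hv
    have hvbox : ∀ k, v k ∈ Set.Icc (0 : ℝ) 1 := hyb_box hy hw T
    rcases eq_or_ne j i with rfl | hij
    · rw [Pd_update_self]; exact ih
    · -- Pd f i (update v j (w j)) vs Pd f i (update v j (v j)) = Pd f i v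
      have key : ∀ t : ℝ, Pd f i (Function.update v j t)
          = (1 - t) * Pd f i (Function.update v j 0) + t * Pd f i (Function.update v j 1) :=
        fun t => affProp_Pd f i v j t
      have hvj : v j = y j := by simp [hv, hyb, hjT]
      have hslope : Pd f i (Function.update v j 1) ≤ Pd f i (Function.update v j 0) :=
        Pd_update_le f hf hij v hvbox
      have hv_eq : Pd f i v = (1 - v j) * Pd f i (Function.update v j 0)
          + v j * Pd f i (Function.update v j 1) := (affProp_Pd f i).self_eq v j
      have hle' : v j ≤ w j := by rw [hvj]; exact hle j
      have : Pd f i (Function.update v j (w j)) ≤ Pd f i v := by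
        rw [key (w j), hv_eq]
        nlinarith
      exact le_trans this ih

/-- exact first-order step along one coordinate -/
lemma mExt_update_eq (f : Finset X → ℝ) (y : X → ℝ) (j : X) (s t : ℝ) :
    mExt f (Function.update y j t) - mExt f (Function.update y j s) = (t - s) * Pd f j y := by
  have h1 := affProp_mExt f y j t
  have h2 := affProp_mExt f y j s
  unfold Pd
  rw [h1, h2]
  ring

end MFOB

open MFOB in
/-- First-order bounds for the multilinear extension of a submodular function
when increasing coordinates. -/
theorem multilinear_first_order_bounds
    {X : Type*} [Fintype X] [DecidableEq X] (f : Finset X → ℝ) (hf : Submodular f)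
    (x x' : X → ℝ) (hx : ∀ i, x i ∈ Set.Icc (0 : ℝ) 1)
    (hx' : ∀ i, x' i ∈ Set.Icc (0 : ℝ) 1) (hle : ∀ i, x i ≤ x' i) :
    mExt f x' ≤ mExt f x + ∑ i : X, (x' i - x i) * fderiv ℝ (mExt f) x (Pi.single i 1) ∧
      mExt f x + ∑ i : X, (x' i - x i) * fderiv ℝ (mExt f) x' (Pi.single i 1) ≤ mExt f x' := by
  classical
  -- differentiability
  have hdiff : Differentiable ℝ (mExt f) := by
    unfold mExt
    refine Differentiable.fun_sum fun S _ => Differentiable.const_mul (Differentiable.mul ?_ ?_) _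
    · intro y
      exact (HasFDerivAt.finset_prod (fun i (_ : i ∈ S) => hasFDerivAt_apply i y)).differentiableAt
    · intro y
      exact (HasFDerivAt.finset_prod (fun j (_ : j ∈ Sᶜ) =>
        (hasFDerivAt_const (1:ℝ) y).sub (hasFDerivAt_apply j y))).differentiableAt
  -- derivative identification
  have hderiv : ∀ (y : X → ℝ) (i : X),
      fderiv ℝ (mExt f) y (Pi.single i 1) = Pd f i y := by
    intro y i
    have hu : ∀ s : ℝ, HasDerivAt (fun t : ℝ => Function.update y i t) (Pi.single i 1) s := by
      intro s
      have : (fun t : ℝ => Function.update y i t)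
          = fun t : ℝ => y + (t - y i) • (Pi.single i 1 : X → ℝ) := by
        funext t k
        rcases eq_or_ne k i with rfl | h
        · simp
        · simp [Function.update_of_ne h, Pi.single_apply, h]
      rw [this]
      have h1 : HasDerivAt (fun t : ℝ => t - y i) 1 s := (hasDerivAt_id s).sub_const (y i)
      have h2 := h1.smul_const (Pi.single i 1 : X → ℝ)
      simpa using h2.const_add y
    have hcomp : HasDerivAt (fun t : ℝ => mExt f (Function.update y i t))
        (fderiv ℝ (mExt f) y (Pi.single i 1)) (y i) := by
      have := ((hdiff (Function.update y i (y i))).hasFDerivAt).comp_hasDerivAt (y i) (hu (y i))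
      rw [Function.update_eq_self] at this; exact this
    have haff : HasDerivAt (fun t : ℝ => mExt f (Function.update y i t)) (Pd f i y) (y i) := by
      have heq : (fun t : ℝ => mExt f (Function.update y i t))
          = fun t : ℝ => mExt f (Function.update y i 0) + t * Pd f i y := by
        funext t
        have := affProp_mExt f y i t
        unfold Pd
        rw [this]; ring
      rw [heq]
      simpa using ((hasDerivAt_id (y i)).mul_const (Pd f i y)).const_add (mExt f (Function.update y i 0))
    exact hcomp.unique haff
  -- hybrid bounds
  have hyb_le : ∀ (T : Finset X) (k : X), x k ≤ hyb x x' T k ∧ hyb x x' T k ≤ x' k := by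
    intro T k
    unfold hyb
    by_cases h : k ∈ T <;> simp [h, hle k]
  have main : ∀ T : Finset X,
      (mExt f (hyb x x' T) ≤ mExt f x + ∑ i ∈ T, (x' i - x i) * Pd f i x) ∧
      (mExt f x + ∑ i ∈ T, (x' i - x i) * Pd f i x' ≤ mExt f (hyb x x' T)) := by
    intro T
    induction T using Finset.induction_on with
    | empty => rw [hyb_empty]; constructor <;> simp
    | @insert j T hjT ih =>
      rw [hyb_insert, Finset.sum_insert hjT, Finset.sum_insert hjT]
      set v := hyb x x' T with hv
      have hvbox : ∀ k, v k ∈ Set.Icc (0 : ℝ) 1 := hyb_box hx hx' T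
      have hvj : v j = x j := by simp [hv, hyb, hjT]
      have hstep : mExt f (Function.update v j (x' j)) - mExt f v = (x' j - x j) * Pd f j v := by
        have h := mExt_update_eq f v j (x j) (x' j)
        have hv' : Function.update v j (x j) = v := by
          rw [← hvj]; exact Function.update_eq_self j v
        rw [hv'] at h
        exact h
      have hmono1 : Pd f j v ≤ Pd f j x :=
        Pd_antitone f hf j hx hvbox (fun k => (hyb_le T k).1)
      have hmono2 : Pd f j x' ≤ Pd f j v :=
        Pd_antitone f hf j hvbox hx' (fun k => (hyb_le T k).2)
      have hnn : 0 ≤ x' j - x j := sub_nonneg.mpr (hle j)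
      constructor
      · have : mExt f (Function.update v j (x' j))
            ≤ mExt f v + (x' j - x j) * Pd f j x := by nlinarith
        linarith [ih.1]
      · have : mExt f v + (x' j - x j) * Pd f j x' ≤ mExt f (Function.update v j (x' j)) := by
          nlinarith
        linarith [ih.2]
  have hfin := main Finset.univ
  rw [hyb_univ] at hfin
  constructor
  · calc mExt f x' ≤ mExt f x + ∑ i : X, (x' i - x i) * Pd f i x := hfin.1
      _ = mExt f x + ∑ i : X, (x' i - x i) * fderiv ℝ (mExt f) x (Pi.single i 1) := by
        congr 1; exact Finset.sum_congr rfl fun i _ => by rw [hderiv]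
  · calc mExt f x + ∑ i : X, (x' i - x i) * fderiv ℝ (mExt f) x' (Pi.single i 1)
        = mExt f x + ∑ i : X, (x' i - x i) * Pd f i x' := by
          congr 1; exact Finset.sum_congr rfl fun i _ => by rw [hderiv]
      _ ≤ mExt f x' := hfin.2
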